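/- Let S = S[m/n, l/n] be a rotational symbol sequence with gcd(m,n)=1 and 2 ≤ l ≤ n−2. Then the sequence Š obtained by flipping S at index 0 is the rotational sequence S[m/n, (l−1)/n] shifted left by −d, and the sequence Ŝ obtained by flipping S at index ld is the rotational sequence S[m/n, (l+1)/n], where d = m^{−1} mod n. In particular, Š has exactly l−1 symbols L per period and Ŝ has exactly l+1 symbols L per period. -/

import Mathlib

/-- The rotational symbol sequence `S[α,β]`, `true = L`, `false = R`. -/
noncomputable def rotSeq (α β : ℝ) : ℤ → Bool :=
  fun i => if Int.fract ((i : ℝ) * α) < β then true else false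

/-- Left cyclic shift by `k`: `(S^{(k)})_i = S_{i+k}`. -/
def shiftSeq (k : ℤ) (S : ℤ → Bool) : ℤ → Bool := fun i => S (i + k)

/-- Flip of an `n`-periodic sequence at index `j` (and all its copies mod `n`). -/
def flipSeq (n : ℕ) (j : ℤ) (S : ℤ → Bool) : ℤ → Bool :=
  fun i => if (i - j) % (n : ℤ) = 0 then !(S i) else S i

lemma fract_int_mul_div (m n : ℕ) (hn : 0 < n) (i : ℤ) :
    Int.fract ((i:ℝ) * ((m:ℝ)/n)) = (((i * m) % n : ℤ) : ℝ) / n := by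
  have hn0 : (0:ℝ) < n := by exact_mod_cast hn
  have hq := Int.mul_ediv_add_emod (i * m) (n:ℤ)
  have hq' : ((n:ℝ)) * ((i * (m:ℤ)) / (n:ℤ) : ℤ) + (((i * m) % n : ℤ) : ℝ) = (i:ℝ) * m := by
    exact_mod_cast congrArg (Int.cast : ℤ → ℝ) hq
  have key : (i:ℝ) * ((m:ℝ)/n) = ((i * (m:ℤ)) / (n:ℤ) : ℤ) + (((i * m) % n : ℤ) : ℝ) / n := by
    field_simp
    linarith [hq']
  rw [key, Int.fract_intCast_add, Int.fract_eq_self.mpr]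
  constructor
  · apply div_nonneg _ hn0.le
    exact_mod_cast Int.emod_nonneg _ (by exact_mod_cast hn.ne' : (n:ℤ) ≠ 0)
  · rw [div_lt_one hn0]
    exact_mod_cast Int.emod_lt_of_pos _ (by exact_mod_cast hn)

lemma rotSeq_true_iff (m n : ℕ) (hn : 0 < n) (c i : ℤ) :
    rotSeq ((m:ℝ)/n) ((c:ℝ)/n) i = true ↔ (i * m) % (n:ℤ) < c := by
  have hn0 : (0:ℝ) < n := by exact_mod_cast hn
  unfold rotSeq
  rw [fract_int_mul_div m n hn i]
  have h : (((i*m)%n : ℤ):ℝ)/n < (c:ℝ)/n ↔ (i * m) % (n:ℤ) < c := by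
    rw [div_lt_div_iff_of_pos_right hn0]
    exact_mod_cast Iff.rfl
  simp [h]

lemma count_comp (m n d : ℕ) (hn : 0 < n) (hd : (m*d) % n = 1)
    (P : ℕ → Prop) [DecidablePred P] :
    ((Finset.range n).filter (fun i => P ((i*m) % n))).card
      = ((Finset.range n).filter P).card := by
  have key1 : ∀ i < n, ((i*m)%n * d) % n = i := by
    intro i hi
    rw [Nat.mod_mul_mod, mul_assoc, Nat.mul_mod, hd, mul_one, Nat.mod_mod_of_dvd _ dvd_rfl,
      Nat.mod_eq_of_lt hi]
  have key2 : ∀ j < n, ((j*d)%n * m) % n = j := by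
    intro j hj
    rw [Nat.mod_mul_mod, mul_assoc, mul_comm d m, Nat.mul_mod, hd, mul_one,
      Nat.mod_mod_of_dvd _ dvd_rfl, Nat.mod_eq_of_lt hj]
  apply Finset.card_nbij' (fun i => (i*m) % n) (fun j => (j*d) % n)
  · intro a ha
    simp only [Finset.mem_coe, Finset.mem_filter, Finset.mem_range] at ha ⊢
    exact ⟨Nat.mod_lt _ hn, ha.2⟩
  · intro a ha
    simp only [Finset.mem_coe, Finset.mem_filter, Finset.mem_range] at ha ⊢
    refine ⟨Nat.mod_lt _ hn, ?_⟩
    rw [key2 a ha.1]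
    exact ha.2
  · intro a ha
    simp only [Finset.mem_coe, Finset.mem_filter, Finset.mem_range] at ha
    exact key1 a ha.1
  · intro a ha
    simp only [Finset.mem_coe, Finset.mem_filter, Finset.mem_range] at ha
    exact key2 a ha.1

/-- For `S = S[m/n, l/n]` with `gcd(m,n)=1`, `2 ≤ l ≤ n−2`,
`d = m⁻¹ mod n`: the flip `Š` of `S` at index `0` equals `S[m/n,(l−1)/n]`
shifted left by `−d`, the flip `Ŝ` of `S` at index `ld` equals
`S[m/n,(l+1)/n]`; moreover `Š` has exactly `l−1` symbols `L` per period and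
`Ŝ` has exactly `l+1` symbols `L` per period. -/
theorem rotSeq_flip_identifications (m n l d : ℕ) (hn : 0 < n)
    (hco : Nat.Coprime m n) (hl1 : 2 ≤ l) (hl2 : l ≤ n - 2)
    (hd : (m * d) % n = 1) :
    flipSeq n 0 (rotSeq ((m : ℝ) / n) ((l : ℝ) / n))
      = shiftSeq (-(d : ℤ)) (rotSeq ((m : ℝ) / n) (((l : ℝ) - 1) / n)) ∧
    flipSeq n ((l * d : ℕ) : ℤ) (rotSeq ((m : ℝ) / n) ((l : ℝ) / n))
      = rotSeq ((m : ℝ) / n) (((l : ℝ) + 1) / n) ∧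
    ((Finset.range n).filter
        (fun i : ℕ => flipSeq n 0 (rotSeq ((m : ℝ) / n) ((l : ℝ) / n)) ((i : ℤ)) = true)).card
      = l - 1 ∧
    ((Finset.range n).filter
        (fun i : ℕ => flipSeq n ((l * d : ℕ) : ℤ)
          (rotSeq ((m : ℝ) / n) ((l : ℝ) / n)) (i : ℤ) = true)).card
      = l + 1 := by
  have hln : l + 2 ≤ n := by omega
  have hnZ : (0:ℤ) < n := by exact_mod_cast hn
  have hnZ' : (n:ℤ) ≠ 0 := hnZ.ne'
  have hlnZ : (l:ℤ) + 2 ≤ (n:ℤ) := by exact_mod_cast hln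
  have hl1Z : (2:ℤ) ≤ (l:ℤ) := by exact_mod_cast hl1
  have hcop : IsCoprime (n:ℤ) (m:ℤ) := by
    rw [Nat.isCoprime_iff_coprime]
    exact hco.symm
  have hdm : ((d:ℤ) * m) % n = 1 := by
    have := congrArg (fun x : ℕ => (x:ℤ)) hd
    push_cast at this
    rw [mul_comm]
    exact this
  have hzero : ∀ i : ℤ, (i * m) % (n:ℤ) = 0 ↔ i % (n:ℤ) = 0 := by
    intro i
    constructor
    · intro h
      have h2 : (n:ℤ) ∣ i * m := Int.dvd_of_emod_eq_zero h
      exact Int.emod_eq_zero_of_dvd (hcop.dvd_of_dvd_mul_right h2)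
    · intro h
      have h2 : (n:ℤ) ∣ i := Int.dvd_of_emod_eq_zero h
      exact Int.emod_eq_zero_of_dvd (h2.mul_right m)
  have hS : ∀ i : ℤ, rotSeq ((m:ℝ)/n) ((l:ℝ)/n) i = true ↔ (i * m) % (n:ℤ) < (l:ℤ) := by
    intro i
    have := rotSeq_true_iff m n hn (l:ℤ) i
    rwa [Int.cast_natCast] at this
  have hT : ∀ i : ℤ, rotSeq ((m:ℝ)/n) (((l:ℝ)-1)/n) i = true ↔ (i * m) % (n:ℤ) < (l:ℤ)-1 := by
    intro i
    have := rotSeq_true_iff m n hn ((l:ℤ)-1) i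
    rwa [show (((l:ℤ)-1 : ℤ):ℝ) = (l:ℝ)-1 by push_cast; ring] at this
  have hU : ∀ i : ℤ, rotSeq ((m:ℝ)/n) (((l:ℝ)+1)/n) i = true ↔ (i * m) % (n:ℤ) < (l:ℤ)+1 := by
    intro i
    have := rotSeq_true_iff m n hn ((l:ℤ)+1) i
    rwa [show (((l:ℤ)+1 : ℤ):ℝ) = (l:ℝ)+1 by push_cast; ring] at this
  have hrange : ∀ i : ℤ, 0 ≤ (i * m) % (n:ℤ) ∧ (i * m) % (n:ℤ) < n := fun i =>
    ⟨Int.emod_nonneg _ hnZ', Int.emod_lt_of_pos _ hnZ⟩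
  -- key computation for part 1
  have hsub : ∀ i : ℤ, ((i + -(d:ℤ)) * m) % (n:ℤ) = ((i*m) % (n:ℤ) - 1) % n := by
    intro i
    rw [show (i + -(d:ℤ))*m = i*m - (d:ℤ)*m by ring, Int.sub_emod, hdm]
  have part1 : flipSeq n 0 (rotSeq ((m:ℝ)/n) ((l:ℝ)/n))
      = shiftSeq (-(d:ℤ)) (rotSeq ((m:ℝ)/n) (((l:ℝ)-1)/n)) := by
    funext i
    simp only [flipSeq, shiftSeq, sub_zero]
    by_cases hc : i % (n:ℤ) = 0
    · have hr : (i*m) % (n:ℤ) = 0 := (hzero i).mpr hc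
      have hSi : rotSeq ((m:ℝ)/n) ((l:ℝ)/n) i = true := (hS i).mpr (by omega)
      have hm1 : ((i*m) % (n:ℤ) - 1) % n = (n:ℤ) - 1 := by
        rw [hr, show (0:ℤ)-1 = ((n:ℤ)-1) + n*(-1) by ring, Int.add_mul_emod_self_left]
        exact Int.emod_eq_of_lt (by omega) (by omega)
      have hRHS : rotSeq ((m:ℝ)/n) (((l:ℝ)-1)/n) (i + -(d:ℤ)) = false := by
        rw [← Bool.not_eq_true, hT, hsub, hm1]
        omega
      rw [if_pos hc, hSi, hRHS]
      rfl
    · have hr0 : (i*m) % (n:ℤ) ≠ 0 := fun h => hc ((hzero i).mp h)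
      have hr := hrange i
      have hsub1 : ((i*(m:ℤ)) % (n:ℤ) - 1) % (n:ℤ) = (i*(m:ℤ)) % (n:ℤ) - 1 :=
        Int.emod_eq_of_lt (by omega) (by omega)
      rw [if_neg hc, Bool.eq_iff_iff, hS, hT, hsub, hsub1]
      omega
  -- key computation for part 2
  have hld : (((l*d:ℕ):ℤ) * m) % (n:ℤ) = (l:ℤ) := by
    push_cast
    rw [show (l:ℤ)*d*m = (l:ℤ)*((d:ℤ)*m) by ring, Int.mul_emod, hdm, mul_one,
      Int.emod_emod_of_dvd _ dvd_rfl, Int.emod_eq_of_lt (by omega) (by omega)]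
  have part2 : flipSeq n ((l * d : ℕ) : ℤ) (rotSeq ((m:ℝ)/n) ((l:ℝ)/n))
      = rotSeq ((m:ℝ)/n) (((l:ℝ)+1)/n) := by
    funext i
    simp only [flipSeq]
    by_cases hc : (i - ((l*d:ℕ):ℤ)) % (n:ℤ) = 0
    · have hdvd : (n:ℤ) ∣ i - ((l*d:ℕ):ℤ) := Int.dvd_of_emod_eq_zero hc
      have hmod : ((l*d:ℕ):ℤ) ≡ i [ZMOD (n:ℤ)] := Int.ModEq.symm (Int.modEq_iff_dvd.mpr (by
        have : ((l*d:ℕ):ℤ) - i = -(i - ((l*d:ℕ):ℤ)) := by ring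
        rw [this]
        exact hdvd.neg_right))
      have hr : (i*m) % (n:ℤ) = (l:ℤ) := by
        have h2 := hmod.mul_right (m:ℤ)
        have : (i * m) % (n:ℤ) = (((l*d:ℕ):ℤ) * m) % (n:ℤ) := h2.symm
        rw [this, hld]
      have hSi : rotSeq ((m:ℝ)/n) ((l:ℝ)/n) i = false := by
        rw [← Bool.not_eq_true, hS]
        omega
      have hUi : rotSeq ((m:ℝ)/n) (((l:ℝ)+1)/n) i = true := (hU i).mpr (by omega)
      rw [if_pos hc, hSi, hUi]
      rfl
    · have hne : (i*m) % (n:ℤ) ≠ (l:ℤ) := by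
        intro h
        apply hc
        have h2 : (n:ℤ) ∣ (i - ((l*d:ℕ):ℤ)) * m := by
          apply Int.dvd_of_emod_eq_zero
          rw [sub_mul, Int.sub_emod, h, hld, sub_self, Int.zero_emod]
        exact Int.emod_eq_zero_of_dvd (hcop.dvd_of_dvd_mul_right h2)
      rw [if_neg hc, Bool.eq_iff_iff, hS, hU]
      omega
  refine ⟨part1, part2, ?_, ?_⟩
  · -- count for Š
    have hchar : ∀ i ∈ Finset.range n,
        (flipSeq n 0 (rotSeq ((m:ℝ)/n) ((l:ℝ)/n)) ((i:ℤ)) = true)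
          ↔ (fun j => 1 ≤ j ∧ j < l) ((i*m) % n) := by
      intro i _
      simp only [flipSeq, sub_zero]
      have hcast : ((i:ℤ) * m) % (n:ℤ) = (((i*m) % n : ℕ) : ℤ) := by push_cast; ring_nf
      by_cases hc : (i:ℤ) % (n:ℤ) = 0
      · have hr : ((i:ℤ)*m) % (n:ℤ) = 0 := (hzero i).mpr hc
        have hSi : rotSeq ((m:ℝ)/n) ((l:ℝ)/n) (i:ℤ) = true := (hS i).mpr (by omega)
        rw [if_pos hc, hSi]
        rw [hcast] at hr
        simp only [Bool.not_true, Bool.false_eq_true, false_iff]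
        omega
      · have hr0 : ((i:ℤ)*m) % (n:ℤ) ≠ 0 := fun h => hc ((hzero i).mp h)
        have hr := hrange (i:ℤ)
        rw [if_neg hc, hS]
        rw [hcast] at hr0 hr ⊢
        constructor
        · intro h; omega
        · intro h; omega
    rw [Finset.filter_congr hchar]
    have hcc := count_comp m n d hn hd (fun j => 1 ≤ j ∧ j < l)
    have hIco : ((Finset.range n).filter (fun j => 1 ≤ j ∧ j < l)).card = l - 1 := by
      rw [show (Finset.range n).filter (fun j => 1 ≤ j ∧ j < l) = Finset.Ico 1 l from by
        ext j
        simp only [Finset.mem_filter, Finset.mem_range, Finset.mem_Ico]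
        omega, Nat.card_Ico]
    exact hcc.trans hIco
  · -- count for Ŝ
    have hchar : ∀ i ∈ Finset.range n,
        (flipSeq n ((l*d:ℕ):ℤ) (rotSeq ((m:ℝ)/n) ((l:ℝ)/n)) ((i:ℤ)) = true)
          ↔ (fun j => j < l + 1) ((i*m) % n) := by
      intro i _
      rw [part2, hU]
      have hcast : ((i:ℤ) * m) % (n:ℤ) = (((i*m) % n : ℕ) : ℤ) := by push_cast; ring_nf
      rw [hcast]
      constructor
      · intro h; exact_mod_cast h
      · intro h; exact_mod_cast h
    rw [Finset.filter_congr hchar]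
    have hcc := count_comp m n d hn hd (fun j => j < l + 1)
    have hR : ((Finset.range n).filter (fun j => j < l + 1)).card = l + 1 := by
      rw [show (Finset.range n).filter (fun j => j < l + 1) = Finset.range (l+1) from by
        ext j
        simp only [Finset.mem_filter, Finset.mem_range]
        omega, Finset.card_range]
    exact hcc.trans hR
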